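/- Let H be a complex Hilbert space. The map f : 𝒫(R(H)) → 𝒟ℐ(L(H)), f(S) = {K ∈ L(H) : every ray contained in K belongs to S}, is an order isomorphism between the power set of the ray space and the lattice of distributive ideals of L(H), with inverse g(I) = the set of all rays contained in some member of I. -/

import Mathlib

variable {H : Type*} [NormedAddCommGroup H] [InnerProductSpace ℂ H]

/-- The ray space: the set of one-dimensional subspaces (rays) of `H`. -/
def RaySp (H : Type*) [NormedAddCommGroup H] [InnerProductSpace ℂ H] :
    Set (Submodule ℂ H) :=
  {r | ∃ ψ : H, ψ ≠ 0 ∧ r = (ℂ ∙ ψ)}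

/-- The set of rays contained in a subspace `K`. -/
def rset (K : Submodule ℂ H) : Set (Submodule ℂ H) :=
  {r | ∃ ψ : H, ψ ≠ 0 ∧ ψ ∈ K ∧ r = (ℂ ∙ ψ)}

/-- The orthogonal pseudo-negation on sets of rays. -/
def pneg (S : Set (Submodule ℂ H)) : Set (Submodule ℂ H) :=
  {r | ∃ ψ : H, ψ ≠ 0 ∧ r = (ℂ ∙ ψ) ∧
    ∀ φ : H, φ ≠ 0 → (ℂ ∙ φ) ∈ S → (inner ℂ ψ φ : ℂ) = 0}

/-- `fset S` = the set of closed subspaces all of whose rays lie in `S`. -/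
def fset (S : Set (Submodule ℂ H)) : Set (Submodule ℂ H) :=
  {K | IsClosed (K : Set H) ∧ ∀ ψ : H, ψ ∈ K → ψ ≠ 0 → (ℂ ∙ ψ) ∈ S}

/-- `gset I` = the set of rays contained in some member of `I`. -/
def gset (I : Set (Submodule ℂ H)) : Set (Submodule ℂ H) :=
  {r | ∃ K ∈ I, ∃ ψ : H, ψ ≠ 0 ∧ ψ ∈ K ∧ r = (ℂ ∙ ψ)}

/-- A distributive ideal of the lattice of closed subspaces of `H`: a nonempty,
downward-closed set of closed subspaces, closed under joins that distribute over
all meets (joins of closed subspaces being closures of algebraic suprema). -/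
def IsDistIdeal (I : Set (Submodule ℂ H)) : Prop :=
  (∀ K ∈ I, IsClosed (K : Set H)) ∧ I.Nonempty ∧
  (∀ K ∈ I, ∀ K' : Submodule ℂ H, IsClosed (K' : Set H) → K' ≤ K → K' ∈ I) ∧
  (∀ 𝒦 ⊆ I, (∀ K' : Submodule ℂ H, IsClosed (K' : Set H) →
      (sSup 𝒦).topologicalClosure ⊓ K' = (⨆ K ∈ 𝒦, K ⊓ K').topologicalClosure) →
    (sSup 𝒦).topologicalClosure ∈ I)

open Classical in
/-- The weakly-Heyting implication on sets of rays, defined via atoms (singleton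
ray sets) and double pseudo-negation. -/
noncomputable def himp' (S₁ S₂ : Set (Submodule ℂ H)) : Set (Submodule ℂ H) :=
  if S₁ = ∅ then RaySp H
  else ⋂ r ∈ S₁, pneg (pneg (pneg {r} ∪ ({r} ∩ S₂)))

lemma span_closed' [CompleteSpace H] (ψ : H) : IsClosed ((ℂ ∙ ψ : Submodule ℂ H) : Set H) :=
  Submodule.closed_of_finiteDimensional _

lemma span_eq_of_mem' {ψ φ : H} (hφ : φ ∈ (ℂ ∙ ψ : Submodule ℂ H)) (h0 : φ ≠ 0) :
    (ℂ ∙ φ : Submodule ℂ H) = ℂ ∙ ψ := by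
  rcases Submodule.mem_span_singleton.mp hφ with ⟨c, rfl⟩
  have hc : c ≠ 0 := by rintro rfl; simp at h0
  exact Submodule.span_singleton_smul_eq (isUnit_iff_ne_zero.mpr hc) ψ

lemma bot_closed' : IsClosed ((⊥ : Submodule ℂ H) : Set H) := by
  rw [Submodule.bot_coe]; exact isClosed_singleton

lemma span_mem_fset' [CompleteSpace H] {S : Set (Submodule ℂ H)} {ψ : H}
    (h : (ℂ ∙ ψ) ∈ S) : (ℂ ∙ ψ) ∈ fset S :=
  ⟨span_closed' ψ, fun φ hφ h0 => by rw [span_eq_of_mem' hφ h0]; exact h⟩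

/-- `fset` is an order isomorphism from the power set of the ray space onto the
distributive ideals of the lattice of closed subspaces, with inverse `gset`. -/
theorem fset_orderIso [CompleteSpace H] :
    (∀ S : Set (Submodule ℂ H), S ⊆ RaySp H → IsDistIdeal (fset S)) ∧
    (∀ S : Set (Submodule ℂ H), S ⊆ RaySp H → gset (fset S) = S) ∧
    (∀ I : Set (Submodule ℂ H), IsDistIdeal I →
      gset I ⊆ RaySp H ∧ fset (gset I) = I) ∧
    (∀ S₁ S₂ : Set (Submodule ℂ H), S₁ ⊆ RaySp H → S₂ ⊆ RaySp H →
      (S₁ ⊆ S₂ ↔ fset S₁ ⊆ fset S₂)) := by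
  refine ⟨?_, ?_, ?_, ?_⟩
  · -- fset S is a distributive ideal
    intro S hS
    refine ⟨fun K hK => hK.1, ⟨⊥, bot_closed', fun ψ hψ h0 => absurd (by simpa using hψ) h0⟩,
      fun K hK K' hK' hle => ⟨hK', fun ψ hψ h0 => hK.2 ψ (hle hψ) h0⟩, ?_⟩
    intro 𝒦 h𝒦 hdist
    refine ⟨Submodule.isClosed_topologicalClosure _, ?_⟩
    intro ψ hψ h0
    by_contra hcon
    have hnot : ∀ K ∈ 𝒦, ψ ∉ K := fun K hK hψK => hcon ((h𝒦 hK).2 ψ hψK h0)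
    have hsup : (⨆ K ∈ 𝒦, K ⊓ (ℂ ∙ ψ)) = ⊥ := by
      refine le_bot_iff.mp (iSup₂_le fun K hK => ?_)
      rintro x ⟨hxK, hxs⟩
      rcases Submodule.mem_span_singleton.mp hxs with ⟨c, rfl⟩
      rcases eq_or_ne c 0 with rfl | hc
      · simp
      · exact absurd (by simpa [smul_smul, inv_mul_cancel₀ hc] using
          Submodule.smul_mem K c⁻¹ hxK) (hnot K hK)
    have heq := hdist (ℂ ∙ ψ) (span_closed' ψ)
    rw [hsup, IsClosed.submodule_topologicalClosure_eq bot_closed'] at heq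
    have : ψ ∈ ((sSup 𝒦).topologicalClosure ⊓ (ℂ ∙ ψ)) :=
      Submodule.mem_inf.mpr ⟨hψ, Submodule.mem_span_singleton_self ψ⟩
    rw [heq] at this
    exact h0 (by simpa using this)
  · -- gset ∘ fset = id
    intro S hS
    ext r
    constructor
    · rintro ⟨K, hK, ψ, h0, hψK, rfl⟩
      exact hK.2 ψ hψK h0
    · intro hr
      obtain ⟨ψ, h0, rfl⟩ := hS hr
      exact ⟨ℂ ∙ ψ, span_mem_fset' hr, ψ, h0, Submodule.mem_span_singleton_self ψ, rfl⟩
  · -- fset ∘ gset = id on distributive ideals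
    intro I hI
    obtain ⟨hcl, ⟨K₀, hK₀⟩, hdown, hjoin⟩ := hI
    refine ⟨fun r => ?_, ?_⟩
    · rintro ⟨K, _, ψ, h0, _, rfl⟩; exact ⟨ψ, h0, rfl⟩
    ext K
    constructor
    · intro hK
      set 𝒦 : Set (Submodule ℂ H) := {L | ∃ ψ : H, ψ ≠ 0 ∧ ψ ∈ K ∧ L = (ℂ ∙ ψ)} with h𝒦def
      have hsub : 𝒦 ⊆ I := by
        rintro L ⟨ψ, h0, hψK, rfl⟩
        obtain ⟨K'', hK'', φ, hφ0, hφK'', hspan⟩ := hK.2 ψ hψK h0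
        refine hdown K'' hK'' (ℂ ∙ ψ) (span_closed' ψ) ?_
        rw [hspan]
        exact (Submodule.span_singleton_le_iff_mem φ K'').mpr hφK''
      have hsup : sSup 𝒦 = K := by
        refine le_antisymm (sSup_le ?_) ?_
        · rintro L ⟨ψ, h0, hψK, rfl⟩
          exact (Submodule.span_singleton_le_iff_mem ψ K).mpr hψK
        · intro x hx
          rcases eq_or_ne x 0 with rfl | hx0
          · exact Submodule.zero_mem _
          · exact le_sSup (show (ℂ ∙ x) ∈ 𝒦 from ⟨x, hx0, hx, rfl⟩) (Submodule.mem_span_singleton_self x)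
      have hKc : K.topologicalClosure = K := IsClosed.submodule_topologicalClosure_eq hK.1
      have := hjoin 𝒦 hsub ?_
      · rwa [hsup, hKc] at this
      intro K' hK'cl
      rw [hsup, hKc]
      have h1 : (⨆ L ∈ 𝒦, L ⊓ K') = K ⊓ K' := by
        refine le_antisymm (iSup₂_le ?_) ?_
        · rintro L ⟨ψ, h0, hψK, rfl⟩
          exact inf_le_inf_right K' ((Submodule.span_singleton_le_iff_mem ψ K).mpr hψK)
        · rintro x ⟨hxK, hxK'⟩
          rcases eq_or_ne x 0 with rfl | hx0
          · exact Submodule.zero_mem _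
          · have hle : (ℂ ∙ x) ⊓ K' ≤ ⨆ L ∈ 𝒦, L ⊓ K' :=
              le_iSup₂ (f := fun (L : Submodule ℂ H) (_ : L ∈ 𝒦) => L ⊓ K') (ℂ ∙ x)
                (show (ℂ ∙ x) ∈ 𝒦 from ⟨x, hx0, hxK, rfl⟩)
            exact hle (Submodule.mem_inf.mpr ⟨Submodule.mem_span_singleton_self x, hxK'⟩)
      rw [h1, IsClosed.submodule_topologicalClosure_eq ?_]
      rw [Submodule.coe_inf]
      exact hK.1.inter hK'cl
    · intro hK
      exact ⟨hcl K hK, fun ψ hψ h0 => ⟨K, hK, ψ, h0, hψ, rfl⟩⟩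
  · -- order iso
    intro S₁ S₂ h1 h2
    constructor
    · intro hss K hK
      exact ⟨hK.1, fun ψ hψ h0 => hss (hK.2 ψ hψ h0)⟩
    · intro hf r hr
      obtain ⟨ψ, h0, rfl⟩ := h1 hr
      exact (hf (span_mem_fset' hr)).2 ψ (Submodule.mem_span_singleton_self ψ) h0
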